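/- Let σ = {p_n : n ∈ ℤ}, let F be the infinitary conjunction ⋀_{n ∈ ℤ} (p_{n+1} → p_n), let P_1 = {p_n : n even}, P_2 = {p_n : n odd}, and let I = σ. Then the partition {P_1, P_2} is separable on the dependency graph DG_{P_1 ∪ P_2}[F], I is both a P_1-stable model and a P_2-stable model of F, but I is not a (P_1 ∪ P_2)-stable model of F. -/
import Mathlib


/-- Infinitary propositional formulas over signature `σ`:
atoms, conjunctions and disjunctions of (index-)sets of formulas, implication. -/
inductive Formula (σ : Type) : Type 1
  | atom : σ → Formula σ
  | conj : (ι : Type) → (ι → Formula σ) → Formula σ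
  | disj : (ι : Type) → (ι → Formula σ) → Formula σ
  | imp : Formula σ → Formula σ → Formula σ

namespace Formula

variable {σ : Type}

/-- `⊥` is the empty disjunction. -/
def bot : Formula σ := Formula.disj Empty (fun e => e.elim)

/-- Binary conjunction `F ∧ G`. -/
def and (F G : Formula σ) : Formula σ := Formula.conj Bool (fun b => if b then F else G)

/-- Binary disjunction `F ∨ G`. -/
def or (F G : Formula σ) : Formula σ := Formula.disj Bool (fun b => if b then F else G)

/-- Negation `¬F` abbreviates `F → ⊥`. -/
def neg (F : Formula σ) : Formula σ := Formula.imp F bot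

/-- Conjunction of a set of atoms. -/
def conjAtoms (S : Set σ) : Formula σ := Formula.conj S (fun p => Formula.atom p.val)

/-- Satisfaction of an infinitary formula by an interpretation `I ⊆ σ`. -/
def Sat (I : Set σ) : Formula σ → Prop
  | .atom p => p ∈ I
  | .conj _ f => ∀ i, Sat I (f i)
  | .disj _ f => ∃ i, Sat I (f i)
  | .imp F G => Sat I F → Sat I G

open Classical in
/-- The reduct `F^I`. -/
noncomputable def reduct (I : Set σ) : Formula σ → Formula σ
  | .atom p => if p ∈ I then Formula.atom p else bot
  | .conj ι f => Formula.conj ι (fun i => reduct I (f i))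
  | .disj ι f => Formula.disj ι (fun i => reduct I (f i))
  | .imp F G => if Sat I (Formula.imp F G) then Formula.imp (reduct I F) (reduct I G) else bot

/-- `I` is an `A`-stable model of `F`: `I` is minimal w.r.t. `≤_A`
(`J ≤_A I` iff `J ⊆ I` and `I \ J ⊆ A`) among interpretations satisfying `F^I`. -/
def AStable (A : Set σ) (I : Set σ) (F : Formula σ) : Prop :=
  Sat I (reduct I F) ∧ ∀ J : Set σ, J ⊆ I → I \ J ⊆ A → Sat J (reduct I F) → J = I

/-- A stable model is a `σ`-stable model. -/
def Stable (I : Set σ) (F : Formula σ) : Prop := AStable Set.univ I F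

/-- The strictly positive atoms `P(F)`. -/
def spos : Formula σ → Set σ
  | .atom p => {p}
  | .conj _ f => ⋃ i, spos (f i)
  | .disj _ f => ⋃ i, spos (f i)
  | .imp _ H => spos H

/-- `F` is (syntactically) the formula `⊥`, i.e. an empty disjunction. -/
def IsBot : Formula σ → Prop
  | .disj ι _ => IsEmpty ι
  | _ => False

open Classical in
mutual
/-- Positive nonnegated atoms `Pnn(F)`. -/
noncomputable def pnn : Formula σ → Set σ
  | .atom p => {p}
  | .conj _ f => ⋃ i, pnn (f i)
  | .disj _ f => ⋃ i, pnn (f i)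
  | .imp G H => if IsBot H then ∅ else nnn G ∪ pnn H

/-- Negative nonnegated atoms `Nnn(F)`. -/
noncomputable def nnn : Formula σ → Set σ
  | .atom _ => ∅
  | .conj _ f => ⋃ i, nnn (f i)
  | .disj _ f => ⋃ i, nnn (f i)
  | .imp G H => if IsBot H then ∅ else pnn G ∪ nnn H
end

/-- The rules of a formula, as antecedent/consequent pairs. -/
def rules : Formula σ → Set (Formula σ × Formula σ)
  | .atom _ => ∅
  | .conj _ f => ⋃ i, rules (f i)
  | .disj _ f => ⋃ i, rules (f i)
  | .imp G H => insert (G, H) (rules H)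

/-- Edge relation of the positive dependency graph `DG_A[F]` (vertex set `A`). -/
noncomputable def DGEdge (F : Formula σ) (A : Set σ) (p q : σ) : Prop :=
  p ∈ A ∧ q ∈ A ∧ ∃ R ∈ rules F, p ∈ spos R.2 ∧ q ∈ pnn R.1

/-- The atoms occurring in a formula. -/
def atoms : Formula σ → Set σ
  | .atom p => {p}
  | .conj _ f => ⋃ i, atoms (f i)
  | .disj _ f => ⋃ i, atoms (f i)
  | .imp G H => atoms G ∪ atoms H

/-- `G` is a definition for the set `Q` of atoms: a conjunction of formulas
`H ∧ C^∧ → q` with `q ∈ Q`, `C ⊆ Q`, and no atom of `Q` occurring in `H`. -/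
def IsDefinition (Q : Set σ) (G : Formula σ) : Prop :=
  ∃ (ι : Type) (g : ι → Formula σ), G = Formula.conj ι g ∧
    ∀ i, ∃ (H : Formula σ) (C : Set σ) (q : σ),
      q ∈ Q ∧ C ⊆ Q ∧ (∀ p ∈ Q, p ∉ atoms H) ∧
      g i = Formula.imp (Formula.and H (conjAtoms C)) (Formula.atom q)

end Formula

section Graph

variable {V : Type*}

/-- An infinite walk in the directed graph with edge relation `E`. -/
def IsInfWalk (E : V → V → Prop) (w : ℕ → V) : Prop := ∀ i, E (w i) (w (i + 1))

/-- The partition `{P₁, P₂}` is infinitely separable: every infinite walk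
visits `P₁` or `P₂` only finitely often. -/
def InfSeparable (E : V → V → Prop) (P1 P2 : Set V) : Prop :=
  ∀ w : ℕ → V, IsInfWalk E w → {i | w i ∈ P1}.Finite ∨ {i | w i ∈ P2}.Finite

/-- `u` and `v` are in the same strongly connected component:
each is reachable from the other. -/
def SameSCC (E : V → V → Prop) (u v : V) : Prop :=
  Relation.ReflTransGen E u v ∧ Relation.ReflTransGen E v u

/-- The partition `{P₁, P₂}` is separable: every strongly connected
component is contained in `P₁` or in `P₂`. -/
def Separable (E : V → V → Prop) (P1 P2 : Set V) : Prop :=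
  ∀ u v, SameSCC E u v → ((u ∈ P1 ∧ v ∈ P1) ∨ (u ∈ P2 ∧ v ∈ P2))

end Graph
/-- the counterexample `⋀_{n ∈ ℤ} (p_{n+1} → p_n)` showing that
separability alone does not suffice for splitting. -/
theorem separable_counterexample :
    let F : Formula ℤ := Formula.conj ℤ (fun n => Formula.imp (Formula.atom (n + 1)) (Formula.atom n))
    let P1 : Set ℤ := {n | Even n}
    let P2 : Set ℤ := {n | Odd n}
    let I : Set ℤ := Set.univ
    Separable (Formula.DGEdge F (P1 ∪ P2)) P1 P2 ∧
      Formula.AStable P1 I F ∧ Formula.AStable P2 I F ∧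
      ¬ Formula.AStable (P1 ∪ P2) I F := by

  intro F P1 P2 I
  have hsat : ∀ J : Set ℤ, Formula.Sat J (Formula.reduct I F) ↔
      ∀ n : ℤ, (n + 1) ∈ J → n ∈ J := by
    intro J
    simp [F, I, Formula.reduct, Formula.Sat]
  have hedge : ∀ p q : ℤ, Formula.DGEdge F (P1 ∪ P2) p q → q = p + 1 := by
    rintro p q ⟨-, -, R, hR, hp, hq⟩
    simp only [F, Formula.rules, Set.mem_iUnion] at hR
    obtain ⟨n, hn⟩ := hR
    simp only [Set.insert_eq, Set.union_empty, Set.mem_singleton_iff] at hn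
    subst hn
    simp [Formula.spos] at hp
    simp [Formula.pnn] at hq
    omega
  refine ⟨?_, ?_, ?_, ?_⟩
  · rintro u v ⟨huv, hvu⟩
    have mono : ∀ a b : ℤ, Relation.ReflTransGen (Formula.DGEdge F (P1 ∪ P2)) a b → a ≤ b := by
      intro a b h
      induction h with
      | refl => exact le_refl _
      | tail _ he ih => have := hedge _ _ he; omega
    have huv' := mono _ _ huv
    have hvu' := mono _ _ hvu
    have : u = v := le_antisymm huv' hvu'
    subst this
    rcases Int.even_or_odd u with h | h
    · exact Or.inl ⟨h, h⟩
    · exact Or.inr ⟨h, h⟩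
  · refine ⟨(hsat I).2 (fun n _ => Set.mem_univ n), ?_⟩
    intro J hJ hdiff hsatJ
    rw [hsat] at hsatJ
    by_contra hne
    obtain ⟨n, hn⟩ : ∃ n : ℤ, n ∉ J := by
      by_contra h
      push_neg at h
      exact hne (Set.eq_univ_of_forall h)
    have hn1 : (n + 1) ∉ J := fun h => hn (hsatJ n h)
    have e1 : Even n := hdiff ⟨Set.mem_univ n, hn⟩
    have e2 : Even (n + 1) := hdiff ⟨Set.mem_univ _, hn1⟩
    obtain ⟨a, ha⟩ := e1
    obtain ⟨b, hb⟩ := e2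
    omega
  · refine ⟨(hsat I).2 (fun n _ => Set.mem_univ n), ?_⟩
    intro J hJ hdiff hsatJ
    rw [hsat] at hsatJ
    by_contra hne
    obtain ⟨n, hn⟩ : ∃ n : ℤ, n ∉ J := by
      by_contra h
      push_neg at h
      exact hne (Set.eq_univ_of_forall h)
    have hn1 : (n + 1) ∉ J := fun h => hn (hsatJ n h)
    have e1 : Odd n := hdiff ⟨Set.mem_univ n, hn⟩
    have e2 : Odd (n + 1) := hdiff ⟨Set.mem_univ _, hn1⟩
    obtain ⟨a, ha⟩ := e1
    obtain ⟨b, hb⟩ := e2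
    omega
  · rintro ⟨-, hmin⟩
    have h0 : (∅ : Set ℤ) = I := by
      apply hmin ∅ (Set.empty_subset _)
      · intro n _
        rcases Int.even_or_odd n with h | h
        · exact Or.inl h
        · exact Or.inr h
      · rw [hsat]; intro n hn; exact hn.elim
    exact Set.empty_ne_univ h0
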